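/- There exists a P̂₄-free graph on 16 vertices that contains K₄ as a subgraph and has exactly 32 = ⌊16²/8⌋ triangles. -/

import Mathlib

/-- `H` is contained in `G` as a (not necessarily induced) subgraph:
there is an injective map of vertices carrying edges of `H` to edges of `G`. -/
def Contains {α β : Type*} (H : SimpleGraph α) (G : SimpleGraph β) : Prop :=
  ∃ f : α → β, Function.Injective f ∧ ∀ ⦃a b⦄, H.Adj a b → G.Adj (f a) (f b)

/-- The suspension `P̂₄` of the path on 4 vertices: a new apex vertex `none`
is joined to all four vertices of `P₄`. -/
def hatP4 : SimpleGraph (Option (Fin 4)) :=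
  SimpleGraph.fromRel (fun a b =>
    (∃ i j, a = some i ∧ b = some j ∧ (SimpleGraph.pathGraph 4).Adj i j) ∨ a = none)

/-- The number of triangles (3-cliques) of a graph. -/
noncomputable def triangleCount {V : Type*} (G : SimpleGraph V) : ℕ :=
  (G.cliqueSet 3).ncard

/-- The edge list of our witness graph: a union of eight `K₄`s on 16 vertices,
each vertex lying in exactly two of them. -/
def myEdges : List (Nat × Nat) := [(0, 1), (0, 2), (0, 3), (0, 8), (0, 12), (0, 13), (1, 2), (1, 3), (1, 6), (1, 10), (1, 14), (2, 3), (2, 5), (2, 11), (2, 15), (3, 4), (3, 7), (3, 9), (4, 5), (4, 7), (4, 9), (4, 10), (4, 12), (5, 10), (5, 11), (5, 12), (5, 15), (6, 9), (6, 10), (6, 11), (6, 13), (6, 14), (7, 8), (7, 9), (7, 14), (7, 15), (8, 12), (8, 13), (8, 14), (8, 15), (9, 11), (9, 13), (10, 12), (10, 14), (11, 13), (11, 15), (12, 13), (14, 15)]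

def adjB (a b : Fin 16) : Bool := (a.val, b.val) ∈ myEdges || (b.val, a.val) ∈ myEdges

lemma adjB_symm : ∀ a b : Fin 16, adjB a b = true → adjB b a = true := by decide
lemma adjB_irrefl : ∀ a : Fin 16, ¬ adjB a a = true := by decide

/-- The witness graph. -/
def G16 : SimpleGraph (Fin 16) where
  Adj a b := adjB a b = true
  symm := ⟨adjB_symm⟩
  loopless := ⟨adjB_irrefl⟩

instance : DecidableRel G16.Adj := fun a b => inferInstanceAs (Decidable (adjB a b = true))

set_option synthInstance.maxSize 4000 in
set_option synthInstance.maxHeartbeats 1000000 in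
set_option maxRecDepth 100000 in
theorem noP4nbhd : ∀ v a : Fin 16, G16.Adj v a → ∀ b, G16.Adj v b → G16.Adj a b →
    ∀ c, G16.Adj v c → G16.Adj b c → a ≠ c → ∀ d, G16.Adj v d → G16.Adj c d →
    a ≠ d → b ≠ d → False := by decide

set_option maxRecDepth 10000 in
theorem hasK4adj : ∀ a b : Fin 4, a ≠ b →
    G16.Adj ⟨a.val, by omega⟩ ⟨b.val, by omega⟩ := by decide

/-- The explicit list of the 32 triangles of `G16`. -/
def T32 : Finset (Finset (Fin 16)) := {({0, 1, 2} : Finset (Fin 16)), ({0, 1, 3} : Finset (Fin 16)), ({0, 2, 3} : Finset (Fin 16)), ({0, 8, 12} : Finset (Fin 16)), ({0, 8, 13} : Finset (Fin 16)), ({0, 12, 13} : Finset (Fin 16)), ({1, 2, 3} : Finset (Fin 16)), ({1, 6, 10} : Finset (Fin 16)), ({1, 6, 14} : Finset (Fin 16)), ({1, 10, 14} : Finset (Fin 16)), ({2, 5, 11} : Finset (Fin 16)), ({2, 5, 15} : Finset (Fin 16)), ({2, 11, 15} : Finset (Fin 16)), ({3, 4, 7} : Finset (Fin 16)), ({3,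 4, 9} : Finset (Fin 16)), ({3, 7, 9} : Finset (Fin 16)), ({4, 5, 10} : Finset (Fin 16)), ({4, 5, 12} : Finset (Fin 16)), ({4, 7, 9} : Finset (Fin 16)), ({4, 10, 12} : Finset (Fin 16)), ({5, 10, 12} : Finset (Fin 16)), ({5, 11, 15} : Finset (Fin 16)), ({6, 9, 11} : Finset (Fin 16)), ({6, 9, 13} : Finset (Fin 16)), ({6, 10, 14} : Finset (Fin 16)), ({6, 11, 13} : Finset (Fin 16)), ({7, 8, 14} : Finset (Fin 16)), ({7, 8, 15} : Finset (Fin 16)), ({7, 14, 15} : Finset (Fin 16)), ({8, 12, 13} : Finset (Fin 16)), ({8, 14, 15} : Finset (Fin 16)), ({9, 11, 13} : Finset (Fin 16))}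

set_option maxHeartbeats 4000000 in
set_option maxRecDepth 100000 in
lemma tri_mem_T32 : ∀ a b c : Fin 16, G16.Adj a b → G16.Adj a c → G16.Adj b c →
    ({a, b, c} : Finset (Fin 16)) ∈ T32 := by decide

lemma T32_cliques : ∀ s ∈ T32, G16.IsNClique 3 s := by
  intro s hs
  simp only [T32, Finset.mem_insert, Finset.mem_singleton] at hs
  rcases hs with rfl|rfl|rfl|rfl|rfl|rfl|rfl|rfl|rfl|rfl|rfl|rfl|rfl|rfl|rfl|rfl|rfl|rfl|rfl|rfl|rfl|rfl|rfl|rfl|rfl|rfl|rfl|rfl|rfl|rfl|rfl|rfl <;>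
    exact SimpleGraph.is3Clique_triple_iff.mpr ⟨by decide, by decide, by decide⟩

set_option maxHeartbeats 4000000 in
set_option maxRecDepth 100000 in
lemma T32_card : T32.card = 32 := by decide

theorem cliqueFinset_eq : G16.cliqueFinset 3 = T32 := by
  ext s
  rw [SimpleGraph.mem_cliqueFinset_iff]
  constructor
  · rintro ⟨hclq, hcard⟩
    obtain ⟨a, b, c, hab, hac, hbc, rfl⟩ := Finset.card_eq_three.mp hcard
    exact tri_mem_T32 a b c (hclq (by simp) (by simp) hab)
      (hclq (by simp) (by simp) hac) (hclq (by simp) (by simp) hbc)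
  · exact T32_cliques s

theorem triCount32 : triangleCount G16 = 32 := by
  rw [triangleCount, ← SimpleGraph.coe_cliqueFinset, Set.ncard_coe_finset,
    cliqueFinset_eq, T32_card]

lemma hatP4_apex (i : Fin 4) : hatP4.Adj none (some i) := by
  rw [hatP4, SimpleGraph.fromRel_adj]
  exact ⟨by simp, Or.inl (Or.inr rfl)⟩

lemma hatP4_path (i j : Fin 4) (h : (SimpleGraph.pathGraph 4).Adj i j) :
    hatP4.Adj (some i) (some j) := by
  rw [hatP4, SimpleGraph.fromRel_adj]
  refine ⟨by simpa using h.ne, Or.inl (Or.inl ⟨i, j, rfl, rfl, h⟩)⟩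

lemma path_adj (i : Fin 4) (h : i.val + 1 < 4) :
    (SimpleGraph.pathGraph 4).Adj i ⟨i.val + 1, h⟩ := by
  rw [SimpleGraph.pathGraph_adj]
  left; rfl

theorem notContains_hatP4 : ¬ Contains hatP4 G16 := by
  rintro ⟨f, hinj, hmap⟩
  have h0 := hmap (hatP4_apex 0)
  have h1 := hmap (hatP4_apex 1)
  have h2 := hmap (hatP4_apex 2)
  have h3 := hmap (hatP4_apex 3)
  have e01 := hmap (hatP4_path 0 1 (path_adj 0 (by norm_num)))
  have e12 := hmap (hatP4_path 1 2 (path_adj 1 (by norm_num)))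
  have e23 := hmap (hatP4_path 2 3 (path_adj 2 (by norm_num)))
  refine noP4nbhd (f none) (f (some 0)) h0 (f (some 1)) h1 e01 (f (some 2)) h2 e12
    ?_ (f (some 3)) h3 e23 ?_ ?_
  · exact fun h => by simpa using hinj h
  · exact fun h => by simpa using hinj h
  · exact fun h => by simpa using hinj h

theorem contains_K4 : Contains (⊤ : SimpleGraph (Fin 4)) G16 := by
  refine ⟨fun i => ⟨i.val, by omega⟩, ?_, ?_⟩
  · intro a b h
    exact Fin.ext (by simpa [Fin.ext_iff] using h)
  · intro a b hab
    exact hasK4adj a b hab.ne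

/-- There is a `P̂₄`-free graph on `16` vertices containing `K₄` as a subgraph
with exactly `32 = ⌊16² / 8⌋` triangles. -/
theorem stmt_18 :
    ∃ G : SimpleGraph (Fin 16), ¬ Contains hatP4 G ∧
      Contains (⊤ : SimpleGraph (Fin 4)) G ∧ triangleCount G = 32 := by
  exact ⟨G16, notContains_hatP4, contains_K4, triCount32⟩
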